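/- The sequence k_n^− is strictly increasing in n: for every integer n ≥ 3, k_{n+1}^− > k_n^−. -/

import Mathlib

/-- `k_n^− = (1/(4π))·ln((1+cos(π/n))/(1−cos(π/n))) + 1/(4n·sin(π/n))` -/
noncomputable def knMinus (n : ℕ) : ℝ :=
  (1 / (4 * Real.pi)) *
      Real.log ((1 + Real.cos (Real.pi / n)) / (1 - Real.cos (Real.pi / n))) +
    1 / (4 * n * Real.sin (Real.pi / n))

noncomputable def gAux (x : ℝ) : ℝ :=
  (1 / (4 * Real.pi)) * (Real.log (1 + Real.cos x) - Real.log (1 - Real.cos x)) +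
    x / (4 * Real.pi * Real.sin x)

lemma gAux_hasDerivAt {x : ℝ} (hx : x ∈ Set.Ioo 0 (Real.pi / 2)) :
    HasDerivAt gAux (-(Real.sin x + x * Real.cos x) / (4 * Real.pi * (Real.sin x) ^ 2)) x := by
  obtain ⟨hx0, hx2⟩ := hx
  have hxpi : x < Real.pi := hx2.trans_le (by linarith [Real.pi_pos])
  have hs : 0 < Real.sin x := Real.sin_pos_of_pos_of_lt_pi hx0 hxpi
  have hc : 0 < Real.cos x := Real.cos_pos_of_mem_Ioo ⟨by linarith [Real.pi_pos], hx2⟩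
  have hpyth := Real.sin_sq_add_cos_sq x
  have hc1 : Real.cos x < 1 := by nlinarith
  have hpi : (0:ℝ) < Real.pi := Real.pi_pos
  have h1 : HasDerivAt (fun y => 1 + Real.cos y) (-Real.sin x) x :=
    (Real.hasDerivAt_cos x).const_add 1
  have h2 : HasDerivAt (fun y => 1 - Real.cos y) (Real.sin x) x := by
    simpa using (Real.hasDerivAt_cos x).const_sub 1
  have hl1 : HasDerivAt (fun y => Real.log (1 + Real.cos y)) (-Real.sin x / (1 + Real.cos x)) x :=
    h1.log (by linarith)
  have hl2 : HasDerivAt (fun y => Real.log (1 - Real.cos y)) (Real.sin x / (1 - Real.cos x)) x :=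
    h2.log (by linarith)
  have hden : HasDerivAt (fun y => 4 * Real.pi * Real.sin y) (4 * Real.pi * Real.cos x) x :=
    (Real.hasDerivAt_sin x).const_mul (4 * Real.pi)
  have hfrac : HasDerivAt (fun y => y / (4 * Real.pi * Real.sin y))
      ((1 * (4 * Real.pi * Real.sin x) - x * (4 * Real.pi * Real.cos x)) /
        (4 * Real.pi * Real.sin x) ^ 2) x :=
    (hasDerivAt_id x).div hden (by positivity)
  have h := (((hl1.sub hl2).const_mul (1 / (4 * Real.pi))).add hfrac)
  refine (h.congr_deriv ?_ : HasDerivAt gAux _ x)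
  have hne1 : (1:ℝ) + Real.cos x ≠ 0 := by linarith
  have hne2 : (1:ℝ) - Real.cos x ≠ 0 := by linarith
  field_simp
  linear_combination (-2 * Real.sin x) * hpyth

lemma gAux_anti : StrictAntiOn gAux (Set.Ioo 0 (Real.pi / 2)) := by
  apply strictAntiOn_of_deriv_neg (convex_Ioo _ _)
  · exact fun x hx => ((gAux_hasDerivAt hx).differentiableAt.continuousAt).continuousWithinAt
  · intro x hx
    rw [interior_Ioo] at hx
    rw [(gAux_hasDerivAt hx).deriv]
    obtain ⟨hx0, hx2⟩ := hx
    have hxpi : x < Real.pi := hx2.trans_le (by linarith [Real.pi_pos])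
    have hs : 0 < Real.sin x := Real.sin_pos_of_pos_of_lt_pi hx0 hxpi
    have hc : 0 < Real.cos x := Real.cos_pos_of_mem_Ioo ⟨by linarith [Real.pi_pos], hx2⟩
    apply div_neg_of_neg_of_pos
    · nlinarith
    · positivity

lemma knMinus_eq (n : ℕ) (hn : 3 ≤ n) : knMinus n = gAux (Real.pi / n) := by
  have hpi : (0:ℝ) < Real.pi := Real.pi_pos
  have hn0 : (0:ℝ) < n := by exact_mod_cast Nat.lt_of_lt_of_le (by norm_num) hn
  have hx0 : 0 < Real.pi / n := by positivity
  have hx2 : Real.pi / n < Real.pi / 2 := by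
    apply div_lt_div_of_pos_left hpi (by norm_num)
    exact_mod_cast Nat.lt_of_lt_of_le (by norm_num) hn
  have hxpi : Real.pi / n < Real.pi := hx2.trans (by linarith)
  have hs : 0 < Real.sin (Real.pi / n) := Real.sin_pos_of_pos_of_lt_pi hx0 hxpi
  have hc : 0 < Real.cos (Real.pi / n) := Real.cos_pos_of_mem_Ioo ⟨by linarith, hx2⟩
  have hc1 : Real.cos (Real.pi / n) < 1 := by
    have := Real.sin_sq_add_cos_sq (Real.pi / n)
    nlinarith
  unfold knMinus gAux
  rw [Real.log_div (by linarith) (by linarith)]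
  congr 1
  field_simp

/-- The sequence `k_n^−` is strictly increasing: for every `n ≥ 3`, `k_{n+1}^− > k_n^−`. -/
theorem knMinus_strictMono (n : ℕ) (hn : 3 ≤ n) : knMinus (n + 1) > knMinus n := by
  have hpi : (0:ℝ) < Real.pi := Real.pi_pos
  rw [knMinus_eq n hn, knMinus_eq (n + 1) (by omega)]
  have hn0 : (0:ℝ) < n := by exact_mod_cast Nat.lt_of_lt_of_le (by norm_num) hn
  have hn2 : (2:ℝ) < n := by exact_mod_cast Nat.lt_of_lt_of_le (by norm_num) hn
  have h1 : Real.pi / (↑(n + 1) : ℝ) ∈ Set.Ioo 0 (Real.pi / 2) := by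
    constructor
    · have : (0:ℝ) < (↑(n + 1) : ℝ) := by push_cast; linarith
      positivity
    · apply div_lt_div_of_pos_left hpi (by norm_num)
      push_cast; linarith
  have h2 : Real.pi / (n : ℝ) ∈ Set.Ioo 0 (Real.pi / 2) := by
    constructor
    · positivity
    · exact div_lt_div_of_pos_left hpi (by norm_num) hn2
  have hlt : Real.pi / (↑(n + 1) : ℝ) < Real.pi / (n : ℝ) := by
    apply div_lt_div_of_pos_left hpi hn0
    push_cast; linarith
  exact gAux_anti h1 h2 hlt
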